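/- (Beesack–Das Opial-type inequality, left boundary condition) Let l, m be real numbers with l > 0, m > 0, l + m > 1, let −∞ < a < b < ∞, and let p, q be non-negative measurable functions on (a, b) with ∫_a^b p(t)^{−1/(l+m−1)} dt < ∞. For a ≤ y ≤ b set K(y) := (m/(l+m))^{m/(l+m)} [∫_a^y q(t)^{(l+m)/l} p(t)^{−m/l} (∫_a^t p(s)^{−1/(l+m−1)} ds)^{l+m−1} dt]^{l/(l+m)} and assume K(y) < ∞. If u is absolutely continuous on [a, y] and u(a) = 0, then ∫_a^y q(t)|u(t)|^l |u'(t)|^m dt ≤ K(y) ∫_a^y p(t)|u'(t)|^{l+m} dt. -/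

import Mathlib

open MeasureTheory Set Filter
open Topology
open scoped ENNReal

/-- `u` is absolutely continuous on `[s,t]` with a.e. derivative `u'`:
`u'` is integrable on `[s,t]` and the fundamental theorem of calculus holds. -/
def ACOn (u u' : ℝ → ℝ) (s t : ℝ) : Prop :=
  MeasureTheory.IntegrableOn u' (Set.Icc s t) ∧
    ∀ x ∈ Set.Icc s t, u x = u s + ∫ σ in s..x, u' σ

/-- The Beesack–Das constant
`K(y) = (m/(l+m))^{m/(l+m)} [∫_a^y q^{(l+m)/l} p^{-m/l} (∫_a^t p^{-1/(l+m-1)})^{l+m-1} dt]^{l/(l+m)}`. -/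
noncomputable def opialK (l m : ℝ) (q p : ℝ → ℝ) (a y : ℝ) : ℝ≥0∞ :=
  ENNReal.ofReal ((m / (l + m)) ^ (m / (l + m))) *
    (∫⁻ t in Set.Ioc a y,
      ENNReal.ofReal (q t) ^ ((l + m) / l) * ENNReal.ofReal (p t) ^ (-(m / l)) *
        (∫⁻ s in Set.Ioc a t, ENNReal.ofReal (p s) ^ (-(1 / (l + m - 1)))) ^ (l + m - 1)) ^
      (l / (l + m))

lemma ae_hasDerivAt_primitive {h : ℝ → ℝ} (hmeas : Measurable h) (hnn : ∀ x, 0 ≤ h x)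
    (hint : Integrable h) (a : ℝ)
    (hZmono : Monotone (fun t => ∫ s in a..t, h s)) :
    ∀ᵐ x, HasDerivAt (fun t => ∫ s in a..t, h s) (h x) x := by
  have hii : ∀ s t : ℝ, IntervalIntegrable h volume s t := fun s t => hint.intervalIntegrable
  have hZst : ∀ s t : ℝ, (∫ x in a..t, h x) - (∫ x in a..s, h x) = ∫ x in s..t, h x := by
    intro s t
    have := intervalIntegral.integral_add_adjacent_intervals (hii a s) (hii s t)
    linarith
  have hcont : Continuous (fun t => ∫ s in a..t, h s) := intervalIntegral.continuous_primitive hii a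
  have hSF : ∀ x, hZmono.stieltjesFunction x = ∫ s in a..x, h s := by
    intro x
    rw [hZmono.stieltjesFunction_eq]
    exact rightLim_eq_of_tendsto
      (hcont.continuousAt.mono_left nhdsWithin_le_nhds)
  have hfin : IsFiniteMeasure (volume.withDensity fun s => ENNReal.ofReal (h s)) := by
    constructor
    rw [withDensity_apply _ MeasurableSet.univ, Measure.restrict_univ,
      ← ofReal_integral_eq_lintegral_ofReal hint (ae_of_all _ hnn)]
    exact ENNReal.ofReal_lt_top
  have hmeq : hZmono.stieltjesFunction.measure
      = volume.withDensity (fun s => ENNReal.ofReal (h s)) := by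
    refine Measure.ext_of_Ioc _ _ (fun s t hst => ?_)
    rw [StieltjesFunction.measure_Ioc, withDensity_apply _ measurableSet_Ioc,
      hSF, hSF, hZst, intervalIntegral.integral_of_le hst.le,
      ofReal_integral_eq_lintegral_ofReal hint.integrableOn (ae_of_all _ hnn)]
  have hrn : (volume.withDensity fun s => ENNReal.ofReal (h s)).rnDeriv volume
      =ᵐ[volume] fun s => ENNReal.ofReal (h s) :=
    Measure.rnDeriv_withDensity volume (ENNReal.measurable_ofReal.comp hmeas)
  have H := hZmono.ae_hasDerivAt
  rw [hmeq] at H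
  filter_upwards [H, hrn] with x hx hx2
  rwa [hx2, ENNReal.toReal_ofReal (hnn x)] at hx

lemma key_chain (g : ℝ → ℝ≥0∞) (hg : Measurable g) (a y c : ℝ) (hc : 0 < c) (hay : a ≤ y) :
    ∫⁻ t in Set.Ioc a y, (∫⁻ s in Set.Ioc a t, g s) ^ c * g t ≤
      ENNReal.ofReal (1 / (c + 1)) * (∫⁻ s in Set.Ioc a y, g s) ^ (c + 1) := by
  have hc1 : (0:ℝ) < c + 1 := by linarith
  by_cases htop : (∫⁻ s in Set.Ioc a y, g s) = ⊤
  · rw [htop, ENNReal.top_rpow_of_pos hc1, ENNReal.mul_top]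
    · exact le_top
    · simp [ENNReal.ofReal_eq_zero, not_le, one_div, inv_pos, hc1]
  -- setup
  set g' : ℝ → ℝ≥0∞ := (Set.Ioc a y).indicator g with hg'def
  have hg'meas : Measurable g' := hg.indicator measurableSet_Ioc
  have hg'fin : ∫⁻ s, g' s ≠ ⊤ := by
    have : (∫⁻ s, g' s) = ∫⁻ s in Set.Ioc a y, g s := lintegral_indicator measurableSet_Ioc g
    rw [this]; exact htop
  have hg'ae : ∀ᵐ s, g' s < ⊤ := ae_lt_top hg'meas hg'fin
  set h : ℝ → ℝ := fun s => (g' s).toReal with hhdef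
  have hhmeas : Measurable h := hg'meas.ennreal_toReal
  have hhnn : ∀ s, 0 ≤ h s := fun s => ENNReal.toReal_nonneg
  have hofReal : ∀ᵐ s, ENNReal.ofReal (h s) = g' s := by
    filter_upwards [hg'ae] with s hs
    exact ENNReal.ofReal_toReal hs.ne
  have hint : Integrable h := integrable_toReal_of_lintegral_ne_top hg'meas.aemeasurable hg'fin
  set Z : ℝ → ℝ := fun t => ∫ s in a..t, h s with hZdef
  have hii : ∀ s t : ℝ, IntervalIntegrable h volume s t := fun s t => hint.intervalIntegrable
  have hZmono : Monotone Z := by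
    intro s t hst
    have h1 := intervalIntegral.integral_add_adjacent_intervals (hii a s) (hii s t)
    have h2 : 0 ≤ ∫ x in s..t, h x := intervalIntegral.integral_nonneg hst (fun x _ => hhnn x)
    simp only [hZdef]; linarith
  -- identification of lintegrals of g with ofReal (Z t)
  have hZof : ∀ t ∈ Set.Icc a y, ENNReal.ofReal (Z t) = ∫⁻ s in Set.Ioc a t, g s := by
    intro t ht
    have h1 : Z t = ∫ s in Set.Ioc a t, h s := intervalIntegral.integral_of_le ht.1
    rw [h1, ofReal_integral_eq_lintegral_ofReal hint.integrableOn (ae_of_all _ hhnn)]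
    have h2 : ∫⁻ s in Set.Ioc a t, ENNReal.ofReal (h s) = ∫⁻ s in Set.Ioc a t, g' s :=
      lintegral_congr_ae (ae_restrict_of_ae hofReal)
    rw [h2]
    refine setLIntegral_congr_fun measurableSet_Ioc (fun σ hσ => ?_)
    exact Set.indicator_of_mem (Set.mem_Ioc.2 ⟨(Set.mem_Ioc.1 hσ).1, (Set.mem_Ioc.1 hσ).2.trans ht.2⟩) g
  -- a.e. derivative
  have hderiv : ∀ᵐ x, HasDerivAt Z (h x) x := ae_hasDerivAt_primitive hhmeas hhnn hint a hZmono
  -- a measurable full-measure set of differentiability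
  set N : Set ℝ := {x | ¬ HasDerivAt Z (h x) x} with hNdef
  have hNnull : volume N = 0 := hderiv
  set E : Set ℝ := (toMeasurable volume N)ᶜ with hEdef
  have hEmeas : MeasurableSet E := (measurableSet_toMeasurable _ _).compl
  have hEc : volume Eᶜ = 0 := by
    rw [hEdef, compl_compl, measure_toMeasurable]; exact hNnull
  have hEderiv : ∀ x ∈ E, HasDerivAt Z (h x) x := by
    intro x hx
    by_contra hcon
    exact hx (subset_toMeasurable volume N hcon)
  set s : Set ℝ := (Set.Ioc a y ∩ {x | h x ≠ 0}) ∩ E with hsdef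
  have hsmeas : MeasurableSet s :=
    ((measurableSet_Ioc.inter (hhmeas (measurableSet_singleton 0).compl)).inter hEmeas)
  -- injectivity of Z on s
  have hinj : Set.InjOn Z s := by
    have key : ∀ x₁ ∈ s, ∀ x₂ ∈ s, x₁ < x₂ → Z x₁ = Z x₂ → False := by
      intro x₁ hx₁ x₂ hx₂ hlt heq
      have hd : HasDerivAt Z (h x₁) x₁ := hEderiv x₁ hx₁.2
      have hslope := hasDerivAt_iff_tendsto_slope.1 hd
      have h0 : Tendsto (slope Z x₁) (𝓝[>] x₁) (𝓝 (h x₁)) :=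
        hslope.mono_left (nhdsWithin_mono _ (fun z hz => ne_of_gt hz))
      have hconst : ∀ᶠ z in 𝓝[>] x₁, slope Z x₁ z = 0 := by
        filter_upwards [Ioo_mem_nhdsGT_of_mem ⟨le_refl x₁, hlt⟩] with z hz
        have h1 : Z z ≤ Z x₂ := hZmono hz.2.le
        have h2 : Z x₁ ≤ Z z := hZmono hz.1.le
        have : Z z = Z x₁ := le_antisymm (heq ▸ h1) h2
        simp [slope, this]
      have h0' : Tendsto (slope Z x₁) (𝓝[>] x₁) (𝓝 0) :=
        Tendsto.congr' (hconst.mono fun z hz => hz.symm) tendsto_const_nhds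
      have : h x₁ = 0 := tendsto_nhds_unique h0 h0'
      exact hx₁.1.2 this
    intro x₁ hx₁ x₂ hx₂ heq
    by_contra hne
    rcases lt_or_gt_of_ne hne with hlt | hlt
    · exact key x₁ hx₁ x₂ hx₂ hlt heq
    · exact key x₂ hx₂ x₁ hx₁ hlt heq.symm
  -- change of variables
  have hder' : ∀ x ∈ s, HasDerivWithinAt Z (h x) s x :=
    fun x hx => (hEderiv x hx.2).hasDerivWithinAt
  have hssub : s ⊆ Set.Ioc a y := fun t ht => ht.1.1
  have hEae : ∀ᵐ t ∂(volume : Measure ℝ), t ∈ E := by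
    rw [Filter.eventually_iff, mem_ae_iff]
    simpa using hEc
  have hgae : ∀ᵐ t ∂(volume.restrict (Set.Ioc a y)), g t = ENNReal.ofReal (h t) := by
    filter_upwards [ae_restrict_of_ae hofReal, ae_restrict_mem measurableSet_Ioc] with t h1 h2
    rw [h1]
    exact (Set.indicator_of_mem h2 g).symm
  have hZy : 0 ≤ Z y := intervalIntegral.integral_nonneg hay (fun v _ => hhnn v)
  calc ∫⁻ t in Set.Ioc a y, (∫⁻ s' in Set.Ioc a t, g s') ^ c * g t
      = ∫⁻ t in Set.Ioc a y, ENNReal.ofReal (Z t) ^ c * ENNReal.ofReal (h t) := by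
        refine lintegral_congr_ae ?_
        filter_upwards [hgae, ae_restrict_mem measurableSet_Ioc] with t h1 h2
        rw [h1, ← hZof t ⟨h2.1.le, h2.2⟩]
    _ = ∫⁻ t in s, ENNReal.ofReal (Z t) ^ c * ENNReal.ofReal (h t) := by
        have hzero : ∫⁻ t in Set.Ioc a y \ s,
            ENNReal.ofReal (Z t) ^ c * ENNReal.ofReal (h t) = 0 := by
          have hae0 : ∀ᵐ t ∂(volume.restrict (Set.Ioc a y \ s)),
              ENNReal.ofReal (Z t) ^ c * ENNReal.ofReal (h t) = 0 := by
            filter_upwards [ae_restrict_mem (measurableSet_Ioc.diff hsmeas),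
              ae_restrict_of_ae hEae] with t ht htE
            have hh0 : h t = 0 := by
              by_contra hne
              exact ht.2 ⟨⟨ht.1, hne⟩, htE⟩
            simp [hh0]
          rw [lintegral_congr_ae hae0, lintegral_zero]
        have hsplit := lintegral_inter_add_diff (μ := volume)
          (fun t => ENNReal.ofReal (Z t) ^ c * ENNReal.ofReal (h t)) (Set.Ioc a y) hsmeas
        rw [← hsplit, hzero, add_zero, Set.inter_eq_self_of_subset_right hssub]
    _ = ∫⁻ t in s, ENNReal.ofReal |h t| * ENNReal.ofReal (Z t) ^ c := by
        refine setLIntegral_congr_fun hsmeas (fun t ht => ?_)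
        rw [abs_of_nonneg (hhnn t), mul_comm]
    _ = ∫⁻ v in Z '' s, ENNReal.ofReal v ^ c := by
        have hcv := lintegral_image_eq_lintegral_abs_det_fderiv_mul volume hsmeas
          (fun x hx => (hder' x hx).hasFDerivWithinAt) hinj
          (fun v => ENNReal.ofReal v ^ c)
        simp only [ContinuousLinearMap.det_toSpanSingleton] at hcv
        exact hcv.symm
    _ ≤ ∫⁻ v in Set.Icc 0 (Z y), ENNReal.ofReal v ^ c := by
        refine lintegral_mono' (Measure.restrict_mono ?_ le_rfl) le_rfl
        rintro v ⟨x, hx, rfl⟩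
        exact ⟨intervalIntegral.integral_nonneg hx.1.1.1.le (fun w _ => hhnn w),
          hZmono hx.1.1.2⟩
    _ = ENNReal.ofReal ((Z y) ^ (c+1) / (c+1)) := by
        have h1 : ∀ᵐ v ∂(volume.restrict (Set.Icc (0:ℝ) (Z y))),
            ENNReal.ofReal v ^ c = ENNReal.ofReal (v ^ c) := by
          filter_upwards [ae_restrict_mem measurableSet_Icc] with v hv
          exact ENNReal.ofReal_rpow_of_nonneg hv.1 hc.le
        rw [lintegral_congr_ae h1]
        have hcont' : ContinuousOn (fun v : ℝ => v ^ c) (Set.Icc 0 (Z y)) :=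
          fun v _ => (Real.continuousAt_rpow_const v c (Or.inr hc.le)).continuousWithinAt
        have hint' : IntegrableOn (fun v : ℝ => v ^ c) (Set.Icc 0 (Z y)) :=
          hcont'.integrableOn_compact isCompact_Icc
        have hnn' : 0 ≤ᵐ[volume.restrict (Set.Icc (0:ℝ) (Z y))] fun v : ℝ => v ^ c :=
          (ae_restrict_mem measurableSet_Icc).mono fun v hv => Real.rpow_nonneg hv.1 c
        rw [← ofReal_integral_eq_lintegral_ofReal hint' hnn']
        congr 1
        rw [MeasureTheory.integral_Icc_eq_integral_Ioc, ← intervalIntegral.integral_of_le hZy,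
          integral_rpow (Or.inl (by linarith : (-1:ℝ) < c)),
          Real.zero_rpow (by linarith : c + 1 ≠ 0)]
        ring
    _ = ENNReal.ofReal (1/(c+1)) * (∫⁻ s' in Set.Ioc a y, g s') ^ (c+1) := by
        rw [← hZof y ⟨hay, le_refl y⟩, ENNReal.ofReal_rpow_of_nonneg hZy hc1.le,
          ← ENNReal.ofReal_mul (by positivity)]
        congr 1
        field_simp

/-- **Beesack–Das Opial-type inequality, left boundary condition.** -/
theorem beesack_das_left
    (l m a b : ℝ) (hl : 0 < l) (hm : 0 < m) (hlm : 1 < l + m) (hab : a < b)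
    (p q : ℝ → ℝ) (hpmeas : Measurable p) (hqmeas : Measurable q)
    (hp0 : ∀ᵐ t ∂(volume.restrict (Set.Ioc a b)), 0 ≤ p t)
    (hq0 : ∀ᵐ t ∂(volume.restrict (Set.Ioc a b)), 0 ≤ q t)
    (hpint : (∫⁻ t in Set.Ioc a b, ENNReal.ofReal (p t) ^ (-(1 / (l + m - 1)))) < ⊤)
    (y : ℝ) (hay : a ≤ y) (hyb : y ≤ b)
    (hK : opialK l m q p a y < ⊤)
    (u u' : ℝ → ℝ) (hAC : ACOn u u' a y) (hu0 : u a = 0) :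
    (∫⁻ t in Set.Ioc a y, ENNReal.ofReal (q t * |u t| ^ l * |u' t| ^ m)) ≤
      opialK l m q p a y *
        ∫⁻ t in Set.Ioc a y, ENNReal.ofReal (p t * |u' t| ^ (l + m)) := by
  have hα : 0 < l + m := by linarith
  have hr : 0 < l + m - 1 := by linarith
  -- measurable representative of u'
  have hu'aem : AEMeasurable u' (volume.restrict (Set.Icc a y)) := hAC.1.aemeasurable
  set w : ℝ → ℝ := hu'aem.mk u' with hwdef
  have hwmeas : Measurable w := hu'aem.measurable_mk
  have hw_ae : u' =ᵐ[volume.restrict (Set.Icc a y)] w := hu'aem.ae_eq_mk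
  -- a.e. facts transferred to Ioc a y
  have hsub_ab : Set.Ioc a y ⊆ Set.Ioc a b := Set.Ioc_subset_Ioc le_rfl hyb
  have hp0y : ∀ᵐ t ∂(volume.restrict (Set.Ioc a y)), 0 ≤ p t :=
    ae_restrict_of_ae_restrict_of_subset hsub_ab hp0
  have hq0y : ∀ᵐ t ∂(volume.restrict (Set.Ioc a y)), 0 ≤ q t :=
    ae_restrict_of_ae_restrict_of_subset hsub_ab hq0
  have hGrmeas : Measurable fun t => ENNReal.ofReal (p t) ^ (-(1 / (l + m - 1))) :=
    (ENNReal.measurable_ofReal.comp hpmeas).pow_const _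
  have hppos_ab : ∀ᵐ t ∂(volume.restrict (Set.Ioc a b)), 0 < p t := by
    have h1 : ∀ᵐ t ∂(volume.restrict (Set.Ioc a b)),
        ENNReal.ofReal (p t) ^ (-(1 / (l + m - 1))) < ⊤ := ae_lt_top hGrmeas hpint.ne
    filter_upwards [h1, hp0] with t h1t h2t
    rcases h2t.lt_or_eq with h | h
    · exact h
    · exfalso
      rw [← h, ENNReal.ofReal_zero,
        ENNReal.zero_rpow_of_neg (neg_lt_zero.2 (by positivity))] at h1t
      exact lt_irrefl _ h1t
  have hpposy : ∀ᵐ t ∂(volume.restrict (Set.Ioc a y)), 0 < p t :=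
    ae_restrict_of_ae_restrict_of_subset hsub_ab hppos_ab
  have hw_ae_y : ∀ᵐ t ∂(volume.restrict (Set.Ioc a y)), u' t = w t :=
    ae_restrict_of_ae_restrict_of_subset Set.Ioc_subset_Icc_self hw_ae
  -- notation
  set G : ℝ → ℝ≥0∞ := fun t => ENNReal.ofReal (p t) with hGdef
  have hGmeas : Measurable G := ENNReal.measurable_ofReal.comp hpmeas
  set P : ℝ → ℝ≥0∞ := fun t => ∫⁻ s in Set.Ioc a t, G s ^ (-(1 / (l + m - 1))) with hPdef
  have hPmono : Monotone P := fun s t hst =>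
    lintegral_mono' (Measure.restrict_mono (Set.Ioc_subset_Ioc le_rfl hst) le_rfl) le_rfl
  have hPmeas : Measurable P := hPmono.measurable
  set gg : ℝ → ℝ≥0∞ := fun t => G t * ENNReal.ofReal |w t| ^ (l + m) with hggdef
  have hggmeas : Measurable gg :=
    hGmeas.mul ((ENNReal.measurable_ofReal.comp hwmeas.abs).pow_const _)
  set z : ℝ → ℝ≥0∞ := fun t => ∫⁻ s in Set.Ioc a t, gg s with hzdef
  have hzmono : Monotone z := fun s t hst =>
    lintegral_mono' (Measure.restrict_mono (Set.Ioc_subset_Ioc le_rfl hst) le_rfl) le_rfl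
  have hzmeas : Measurable z := hzmono.measurable
  set Q : ℝ → ℝ≥0∞ := fun t => ENNReal.ofReal (q t) with hQdef
  have hQmeas : Measurable Q := ENNReal.measurable_ofReal.comp hqmeas
  -- identification of gg with the RHS integrand
  have hgg_ae : ∀ᵐ t ∂(volume.restrict (Set.Ioc a y)),
      gg t = ENNReal.ofReal (p t * |u' t| ^ (l + m)) := by
    filter_upwards [hp0y, hw_ae_y] with t h1 h2
    rw [hggdef]
    simp only
    rw [← h2, ENNReal.ofReal_mul h1, ← ENNReal.ofReal_rpow_of_nonneg (abs_nonneg _) hα.le]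
  have hz_eq : z y = ∫⁻ t in Set.Ioc a y, ENNReal.ofReal (p t * |u' t| ^ (l + m)) :=
    lintegral_congr_ae hgg_ae
  -- Step 1: pointwise bound on |u t|
  have step1 : ∀ t ∈ Set.Ioc a y,
      ENNReal.ofReal |u t| ≤ z t ^ (1 / (l + m)) * P t ^ ((l + m - 1) / (l + m)) := by
    intro t ht
    have hat : a ≤ t := ht.1.le
    have hty : t ≤ y := ht.2
    have hsub_t : Set.Ioc a t ⊆ Set.Icc a y := fun x hx => ⟨hx.1.le, hx.2.trans hty⟩
    have hu_t : u t = ∫ x in Set.Ioc a t, u' x := by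
      have h0 := hAC.2 t ⟨hat, hty⟩
      rw [h0, hu0, zero_add, intervalIntegral.integral_of_le hat]
    have hui : IntegrableOn u' (Set.Ioc a t) :=
      hAC.1.mono_set (Set.Ioc_subset_Icc_self.trans (Set.Icc_subset_Icc le_rfl hty))
    have habs : |u t| ≤ ∫ x in Set.Ioc a t, |u' x| := by
      rw [hu_t, ← Real.norm_eq_abs]
      refine (norm_integral_le_integral_norm _).trans_eq ?_
      simp [Real.norm_eq_abs]
    have h2 : ENNReal.ofReal |u t| ≤ ∫⁻ x in Set.Ioc a t, ENNReal.ofReal |w x| := by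
      refine (ENNReal.ofReal_le_ofReal habs).trans_eq ?_
      rw [ofReal_integral_eq_lintegral_ofReal hui.abs (ae_of_all _ fun x => abs_nonneg _)]
      refine lintegral_congr_ae ?_
      filter_upwards [ae_restrict_of_ae_restrict_of_subset hsub_t hw_ae] with x hx
      rw [hx]
    have hconj : Real.HolderConjugate (l + m) ((l + m) / (l + m - 1)) := by
      rw [Real.holderConjugate_iff]
      constructor
      · exact hlm
      · rw [inv_div]
        field_simp
        ring
    have hfa : AEMeasurable (fun x => G x ^ (1 / (l + m)) * ENNReal.ofReal |w x|)
        (volume.restrict (Set.Ioc a t)) :=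
      ((hGmeas.pow_const _).mul (ENNReal.measurable_ofReal.comp hwmeas.abs)).aemeasurable
    have hga : AEMeasurable (fun x => G x ^ (-(1 / (l + m))))
        (volume.restrict (Set.Ioc a t)) := (hGmeas.pow_const _).aemeasurable
    have hH := ENNReal.lintegral_mul_le_Lp_mul_Lq (volume.restrict (Set.Ioc a t)) hconj hfa hga
    have hae_eq : (fun x => ENNReal.ofReal |w x|) =ᵐ[volume.restrict (Set.Ioc a t)]
        (fun x => G x ^ (1 / (l + m)) * ENNReal.ofReal |w x|) *
          fun x => G x ^ (-(1 / (l + m))) := by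
      have hpt : ∀ᵐ x ∂(volume.restrict (Set.Ioc a t)), 0 < p x :=
        ae_restrict_of_ae_restrict_of_subset (Set.Ioc_subset_Ioc le_rfl (hty.trans hyb))
          hppos_ab
      filter_upwards [hpt] with x hx
      have hG0 : G x ≠ 0 := by
        simp only [hGdef, ne_eq, ENNReal.ofReal_eq_zero, not_le]
        exact hx
      have hGt : G x ≠ ⊤ := ENNReal.ofReal_ne_top
      have h1 : G x ^ (1 / (l + m)) * G x ^ (-(1 / (l + m))) = 1 := by
        rw [← ENNReal.rpow_add _ _ hG0 hGt, add_neg_cancel, ENNReal.rpow_zero]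
      simp only [Pi.mul_apply]
      rw [mul_right_comm, h1, one_mul]
    have h3 := (lintegral_congr_ae hae_eq).trans_le hH
    have hfact1 : ∀ x : ℝ, (G x ^ (1 / (l + m)) * ENNReal.ofReal |w x|) ^ (l + m) = gg x := by
      intro x
      rw [ENNReal.mul_rpow_of_nonneg _ _ hα.le, ← ENNReal.rpow_mul,
        one_div_mul_cancel hα.ne', ENNReal.rpow_one]
    have hfact2 : ∀ x : ℝ,
        (G x ^ (-(1 / (l + m)))) ^ ((l + m) / (l + m - 1)) = G x ^ (-(1 / (l + m - 1))) := by
      intro x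
      rw [← ENNReal.rpow_mul]
      congr 1
      field_simp
    simp only [hfact1, hfact2, one_div_div] at h3
    exact h2.trans h3
  -- Step 2: integrand bound and second Hölder
  set AA : ℝ → ℝ≥0∞ := fun t =>
    Q t * P t ^ ((l + m - 1) * l / (l + m)) * G t ^ (-(m / (l + m))) with hAAdef
  set BB : ℝ → ℝ≥0∞ := fun t => z t ^ (l / (l + m)) * gg t ^ (m / (l + m)) with hBBdef
  have hAAmeas : Measurable AA :=
    (hQmeas.mul (hPmeas.pow_const _)).mul (hGmeas.pow_const _)
  have hBBmeas : Measurable BB := (hzmeas.pow_const _).mul (hggmeas.pow_const _)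
  have step2 : ∀ᵐ t ∂(volume.restrict (Set.Ioc a y)),
      ENNReal.ofReal (q t * |u t| ^ l * |u' t| ^ m) ≤ AA t * BB t := by
    filter_upwards [hq0y, hpposy, hw_ae_y, ae_restrict_mem measurableSet_Ioc]
      with t hq hp hw ht
    have habs_l : (0:ℝ) ≤ |u t| ^ l := Real.rpow_nonneg (abs_nonneg _) l
    have hsplit : ENNReal.ofReal (q t * |u t| ^ l * |u' t| ^ m) =
        Q t * ENNReal.ofReal |u t| ^ l * ENNReal.ofReal |w t| ^ m := by
      rw [ENNReal.ofReal_mul (by positivity), ENNReal.ofReal_mul hq, ← hw,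
        ← ENNReal.ofReal_rpow_of_nonneg (abs_nonneg _) hl.le,
        ← ENNReal.ofReal_rpow_of_nonneg (abs_nonneg _) hm.le]
    rw [hsplit]
    have hb := step1 t ht
    have hmono : ENNReal.ofReal |u t| ^ l ≤
        (z t ^ (1 / (l + m)) * P t ^ ((l + m - 1) / (l + m))) ^ l :=
      ENNReal.rpow_le_rpow hb hl.le
    have hle1 : Q t * ENNReal.ofReal |u t| ^ l * ENNReal.ofReal |w t| ^ m ≤
        Q t * (z t ^ (1 / (l + m)) * P t ^ ((l + m - 1) / (l + m))) ^ l *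
          ENNReal.ofReal |w t| ^ m :=
      mul_le_mul' (mul_le_mul' le_rfl hmono) le_rfl
    refine hle1.trans_eq ?_
    -- algebraic identity
    have hG0 : G t ≠ 0 := by
      simp only [hGdef, ne_eq, ENNReal.ofReal_eq_zero, not_le]
      exact hp
    have hGt : G t ≠ ⊤ := ENNReal.ofReal_ne_top
    have hcancel : G t ^ (-(m / (l + m))) * G t ^ (m / (l + m)) = 1 := by
      rw [← ENNReal.rpow_add _ _ hG0 hGt, neg_add_cancel, ENNReal.rpow_zero]
    have hexp1 : (z t ^ (1 / (l + m)) * P t ^ ((l + m - 1) / (l + m))) ^ l =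
        z t ^ (l / (l + m)) * P t ^ ((l + m - 1) * l / (l + m)) := by
      rw [ENNReal.mul_rpow_of_nonneg _ _ hl.le, ← ENNReal.rpow_mul, ← ENNReal.rpow_mul]
      congr 2 <;> field_simp <;> ring
    have hexp2 : gg t ^ (m / (l + m)) = G t ^ (m / (l + m)) * ENNReal.ofReal |w t| ^ m := by
      rw [hggdef]
      simp only
      rw [ENNReal.mul_rpow_of_nonneg _ _ (by positivity), ← ENNReal.rpow_mul]
      congr 2
      field_simp
    rw [hexp1, hAAdef, hBBdef]
    simp only
    rw [hexp2]
    calc Q t * (z t ^ (l / (l + m)) * P t ^ ((l + m - 1) * l / (l + m))) *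
          ENNReal.ofReal |w t| ^ m
        = (Q t * P t ^ ((l + m - 1) * l / (l + m)) * z t ^ (l / (l + m)) *
            ENNReal.ofReal |w t| ^ m) *
            (G t ^ (-(m / (l + m))) * G t ^ (m / (l + m))) := by
          rw [hcancel, mul_one]; ring
      _ = Q t * P t ^ ((l + m - 1) * l / (l + m)) * G t ^ (-(m / (l + m))) *
            (z t ^ (l / (l + m)) * (G t ^ (m / (l + m)) * ENNReal.ofReal |w t| ^ m)) := by
          ring
  have hconj2 : Real.HolderConjugate ((l + m) / l) ((l + m) / m) := by
    rw [Real.holderConjugate_iff]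
    constructor
    · rw [lt_div_iff₀ hl]; linarith
    · rw [inv_div, inv_div]
      field_simp
  have hH2 := ENNReal.lintegral_mul_le_Lp_mul_Lq (volume.restrict (Set.Ioc a y)) hconj2
    hAAmeas.aemeasurable hBBmeas.aemeasurable
  -- identify first factor with the opialK integral
  have hAApow : ∀ t : ℝ, AA t ^ ((l + m) / l) =
      Q t ^ ((l + m) / l) * G t ^ (-(m / l)) * P t ^ (l + m - 1) := by
    intro t
    rw [hAAdef]
    simp only
    rw [ENNReal.mul_rpow_of_nonneg _ _ (by positivity),
      ENNReal.mul_rpow_of_nonneg _ _ (by positivity),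
      ← ENNReal.rpow_mul (P t), ← ENNReal.rpow_mul (G t)]
    have e1 : (l + m - 1) * l / (l + m) * ((l + m) / l) = l + m - 1 := by
      field_simp
    have e2 : -(m / (l + m)) * ((l + m) / l) = -(m / l) := by
      field_simp
    rw [e1, e2]
    ring
  have hBBpow : ∀ t : ℝ, BB t ^ ((l + m) / m) = z t ^ (l / m) * gg t := by
    intro t
    rw [hBBdef]
    simp only
    rw [ENNReal.mul_rpow_of_nonneg _ _ (by positivity),
      ← ENNReal.rpow_mul (z t), ← ENNReal.rpow_mul (gg t)]
    have e1 : l / (l + m) * ((l + m) / m) = l / m := by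
      field_simp
    have e2 : m / (l + m) * ((l + m) / m) = 1 := by
      field_simp
    rw [e1, e2, ENNReal.rpow_one]
  -- second factor bound via the chain rule lemma
  have hchain : ∫⁻ t in Set.Ioc a y, BB t ^ ((l + m) / m) ≤
      ENNReal.ofReal (m / (l + m)) * z y ^ ((l + m) / m) := by
    have h1 : ∫⁻ t in Set.Ioc a y, BB t ^ ((l + m) / m) =
        ∫⁻ t in Set.Ioc a y, (∫⁻ s in Set.Ioc a t, gg s) ^ (l / m) * gg t := by
      refine lintegral_congr fun t => ?_
      rw [hBBpow t, hzdef]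
    rw [h1]
    have h2 := key_chain gg hggmeas a y (l / m) (by positivity) hay
    have e3 : l / m + 1 = (l + m) / m := by field_simp
    have e4 : (1 : ℝ) / (l / m + 1) = m / (l + m) := by
      rw [e3, one_div_div]
    rw [e4, e3] at h2
    exact h2.trans_eq (by rw [hzdef])
  -- assemble
  have hfinal : (∫⁻ t in Set.Ioc a y, BB t ^ ((l + m) / m)) ^ (m / (l + m)) ≤
      ENNReal.ofReal ((m / (l + m)) ^ (m / (l + m))) * z y := by
    refine (ENNReal.rpow_le_rpow hchain (by positivity)).trans_eq ?_
    rw [ENNReal.mul_rpow_of_nonneg _ _ (by positivity), ← ENNReal.rpow_mul,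
      ENNReal.ofReal_rpow_of_nonneg (by positivity) (by positivity)]
    have : (l + m) / m * (m / (l + m)) = 1 := by field_simp
    rw [this, ENNReal.rpow_one]
  calc ∫⁻ t in Set.Ioc a y, ENNReal.ofReal (q t * |u t| ^ l * |u' t| ^ m)
      ≤ ∫⁻ t in Set.Ioc a y, (AA * BB) t := by
        refine lintegral_mono_ae ?_
        filter_upwards [step2] with t ht
        simpa using ht
    _ ≤ (∫⁻ t in Set.Ioc a y, AA t ^ ((l + m) / l)) ^ (1 / ((l + m) / l)) *
        (∫⁻ t in Set.Ioc a y, BB t ^ ((l + m) / m)) ^ (1 / ((l + m) / m)) := hH2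
    _ = (∫⁻ t in Set.Ioc a y,
          Q t ^ ((l + m) / l) * G t ^ (-(m / l)) * P t ^ (l + m - 1)) ^ (l / (l + m)) *
        (∫⁻ t in Set.Ioc a y, BB t ^ ((l + m) / m)) ^ (m / (l + m)) := by
        rw [one_div_div, one_div_div]
        congr 2
        exact lintegral_congr fun t => hAApow t
    _ ≤ (∫⁻ t in Set.Ioc a y,
          Q t ^ ((l + m) / l) * G t ^ (-(m / l)) * P t ^ (l + m - 1)) ^ (l / (l + m)) *
        (ENNReal.ofReal ((m / (l + m)) ^ (m / (l + m))) * z y) :=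
        mul_le_mul' le_rfl hfinal
    _ = opialK l m q p a y * ∫⁻ t in Set.Ioc a y, ENNReal.ofReal (p t * |u' t| ^ (l + m)) := by
        rw [← hz_eq, opialK]
        rw [hGdef, hPdef, hQdef]
        ring
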